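/- Let a ∈ ℝⁿ with ‖a‖_∞ > 0, let a' be a precision-N Diophantine approximation of a, and let α = ‖a‖_∞/‖a'‖_∞. If p is a coordinate with |a_p| = ‖a‖_∞, then a'_p = ±‖a'‖_∞ (with the sign of a_p), and the vector a − α·a' has p-th coordinate equal to 0; moreover every coordinate of a that is zero is also zero in a'. -/

import Mathlib

/-- Key step of the iterated Diophantine approximation (proof of Lemma 3.3):
if `a'` is a precision-`N` Diophantine approximation of `a`, `α = ‖a‖_∞/‖a'‖_∞`,
and `|a_p| = ‖a‖_∞`, then `a'_p = ±‖a'‖_∞ = ±l` (with the sign of `a_p`), the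
`p`-th coordinate of `a − α·a'` vanishes, and zero coordinates of `a` remain
zero in `a'`. -/
theorem stmt19 (n N : ℕ) (a : Fin n → ℝ) (ha : 0 < ⨆ j, |a j|)
    (a' : Fin n → ℤ) (l : ℕ) (hl1 : 1 ≤ l) (hl2 : l ≤ N ^ n)
    (happrox : (⨆ j, |(l : ℝ) * (a j / (⨆ k, |a k|)) - (a' j : ℝ)|) < 1 / N)
    (hnorm : (⨆ j, |(a' j : ℝ)|) = (l : ℝ))
    (p : Fin n) (hp : |a p| = ⨆ j, |a j|) :
    ((0 < a p → (a' p : ℝ) = (l : ℝ)) ∧ (a p < 0 → (a' p : ℝ) = -(l : ℝ))) ∧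
    a p - ((⨆ j, |a j|) / (⨆ j, |(a' j : ℝ)|)) * (a' p : ℝ) = 0 ∧
    ∀ i, a i = 0 → a' i = 0 := by
  set S : ℝ := ⨆ j, |a j| with hS
  have hb : BddAbove (Set.range fun j => |(l : ℝ) * (a j / S) - (a' j : ℝ)|) :=
    Set.Finite.bddAbove (Set.finite_range _)
  have key : ∀ j, |(l : ℝ) * (a j / S) - (a' j : ℝ)| < 1 / N := fun j =>
    lt_of_le_of_lt (le_ciSup hb j) happrox
  have hNpos : (0 : ℝ) < 1 / N := lt_of_le_of_lt (abs_nonneg _) (key p)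
  have hN1 : (1 : ℕ) ≤ N := by
    by_contra h
    push_neg at h
    interval_cases N
    simp at hNpos
  have hNle : (1 : ℝ) / N ≤ 1 := by
    rw [div_le_one (by positivity)]
    exact_mod_cast hN1
  have hlpos : (0 : ℝ) < l := by exact_mod_cast hl1
  -- integer rounding lemma
  have hint : ∀ j (m : ℤ), |(m : ℝ) - (a' j : ℝ)| < 1 / N → a' j = m := by
    intro j m hj
    have h1 : |(m : ℝ) - (a' j : ℝ)| < 1 := lt_of_lt_of_le hj hNle
    have h2 : |((m - a' j : ℤ) : ℝ)| < 1 := by push_cast; exact h1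
    rw [← Int.cast_abs] at h2
    have h3 : |m - a' j| < 1 := by exact_mod_cast h2
    have := Int.abs_lt_one_iff.mp h3
    omega
  have hpos : 0 < a p → (a' p : ℝ) = (l : ℝ) := by
    intro hap
    have hapS : a p = S := by rw [← hp, abs_of_pos hap]
    have : |(l : ℝ) - (a' p : ℝ)| < 1 / N := by
      have := key p
      rwa [hapS, div_self (ne_of_gt ha), mul_one] at this
    have h := hint p (l : ℤ) (by push_cast; exact this)
    rw [h]; push_cast; ring
  have hneg : a p < 0 → (a' p : ℝ) = -(l : ℝ) := by
    intro hap
    have hapS : a p = -S := by rw [← hp, abs_of_neg hap]; ring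
    have : |(-(l : ℝ)) - (a' p : ℝ)| < 1 / N := by
      have := key p
      rw [hapS] at this
      have heq : (l : ℝ) * (-S / S) = -(l : ℝ) := by
        rw [neg_div, div_self (ne_of_gt ha)]; ring
      rwa [heq] at this
    have h := hint p (-(l : ℤ)) (by push_cast; exact this)
    rw [h]; push_cast; ring
  refine ⟨⟨hpos, hneg⟩, ?_, ?_⟩
  · rcases lt_trichotomy (a p) 0 with h | h | h
    · rw [hneg h, hnorm]
      have : a p = -S := by rw [← hp, abs_of_neg h]; ring
      rw [this]; field_simp; ring
    · exfalso; rw [← hp, h, abs_zero] at ha; exact lt_irrefl _ ha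
    · rw [hpos h, hnorm]
      have : a p = S := by rw [← hp, abs_of_pos h]
      rw [this]; field_simp; ring
  · intro i hi
    have := key i
    rw [hi, zero_div, mul_zero, zero_sub, abs_neg] at this
    have h := hint i 0 (by push_cast; rwa [zero_sub, abs_neg])
    exact h
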